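/- Let 𝔤 be a stratified real Lie algebra and L = 𝔤 ⋊ ℝ·D_L the semidirect product of 𝔤 by its grading derivation. If Y ∈ V_1, α ∈ ℝ, and X ∈ V_1 with X ≠ 0, then (ad_{D_L − αY})^m(X) ≠ 0 for every m ∈ ℕ; consequently, no nilpotent Lie subalgebra of L contains both D_L − αY and X. -/

import Mathlib

open Module

/-- The span of all brackets `⁅x, y⁆` with `x ∈ A` and `y ∈ B`. -/
def bracketSpan {L : Type*} [LieRing L] [LieAlgebra ℝ L]
    (A B : Submodule ℝ L) : Submodule ℝ L :=
  Submodule.span ℝ {z | ∃ x ∈ A, ∃ y ∈ B, ⁅x, y⁆ = z}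

/-- `L = 𝔤 ⋊ ℝ·D` is the semidirect product of the stratified Lie algebra `𝔤 = g`
(with stratification `V 1 ⊕ ⋯ ⊕ V s`, `g` a Lie ideal of `L`) by its grading
derivation: `L = g ⊕ ℝ·D` as vector spaces and `⁅D, X⁆ = j • X` for `X ∈ V j`. -/
structure IsSemidirectTD {L : Type*} [LieRing L] [LieAlgebra ℝ L]
    (s : ℕ) (V : ℕ → Submodule ℝ L) (g : LieIdeal ℝ L) (D : L) : Prop where
  s_pos : 0 < s
  top_ne_bot : V s ≠ ⊥
  eq_bot_of_notin : ∀ j : ℕ, j = 0 ∨ s < j → V j = ⊥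
  independent : iSupIndep V
  sup_eq : ⨆ j, V j = (g : Submodule ℝ L)
  bracket_eq : ∀ j : ℕ, 1 ≤ j → j ≤ s → bracketSpan (V j) (V 1) = V (j + 1)
  D_notin : D ∉ (g : Submodule ℝ L)
  compl_sup : (g : Submodule ℝ L) ⊔ (ℝ ∙ D) = ⊤
  compl_inf : (g : Submodule ℝ L) ⊓ (ℝ ∙ D) = ⊥
  grading : ∀ j : ℕ, 1 ≤ j → j ≤ s → ∀ X ∈ V j, ⁅D, X⁆ = (j : ℝ) • X

/-- For `Y, X ∈ V 1`, `X ≠ 0`, and `α ∈ ℝ`, the iterated brackets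
`(ad (D - αY))^m X` never vanish; hence no nilpotent Lie subalgebra of `L`
contains both `D - αY` and `X`. -/
theorem stmt5 {L : Type*} [LieRing L] [LieAlgebra ℝ L]
    (s : ℕ) (V : ℕ → Submodule ℝ L) (g : LieIdeal ℝ L) (D : L)
    (hTD : IsSemidirectTD s V g D)
    (Y : L) (hY : Y ∈ V 1) (α : ℝ) (X : L) (hX : X ∈ V 1) (hX0 : X ≠ 0) :
    (∀ m : ℕ, ((LieAlgebra.ad ℝ L (D - α • Y)) ^ m) X ≠ 0) ∧
    ∀ K : LieSubalgebra ℝ L, (∃ k : ℕ, LieModule.lowerCentralSeries ℝ K K k = ⊥) →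
      ¬(D - α • Y ∈ K ∧ X ∈ K) := by
  set W : L := D - α • Y with hW
  -- the "higher" part of the stratification
  set U : Submodule ℝ L := ⨆ k : ℕ, V (k + 2) with hUdef
  have hVU : ∀ k : ℕ, V (k + 2) ≤ U := fun k => le_iSup (fun k => V (k + 2)) k
  have h1s : 1 ≤ s := hTD.s_pos
  -- brackets with elements of V 1 land in the next layer / in U
  have hbr : ∀ j : ℕ, 1 ≤ j → ∀ Z ∈ V j, ∀ T ∈ V 1, ⁅Z, T⁆ ∈ V (j + 1) := by
    intro j hj Z hZ T hT
    by_cases hjs : j ≤ s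
    · rw [← hTD.bracket_eq j hj hjs]
      exact Submodule.subset_span ⟨Z, hZ, T, hT, rfl⟩
    · have : V j = ⊥ := hTD.eq_bot_of_notin j (Or.inr (by omega))
      have hZ0 : Z = 0 := by simpa [this] using hZ
      simp [hZ0]
  have hYbr : ∀ j : ℕ, 1 ≤ j → ∀ Z ∈ V j, ⁅Y, Z⁆ ∈ V (j + 1) := by
    intro j hj Z hZ
    have : ⁅Y, Z⁆ = -⁅Z, Y⁆ := by rw [← lie_skew]
    rw [this]
    exact neg_mem (hbr j hj Z hZ Y hY)
  -- ad W maps U into U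
  have hadU : ∀ u ∈ U, ⁅W, u⁆ ∈ U := by
    intro u hu
    refine Submodule.iSup_induction (motive := fun z => ⁅W, z⁆ ∈ U) _ hu ?_ (by simp) ?_
    · intro k Z hZ
      by_cases hks : k + 2 ≤ s
      · have hD : ⁅D, Z⁆ = ((k + 2 : ℕ) : ℝ) • Z :=
          hTD.grading (k + 2) (by omega) hks Z hZ
        have h1 : ⁅W, Z⁆ = ((k + 2 : ℕ) : ℝ) • Z - α • ⁅Y, Z⁆ := by
          rw [hW, sub_lie, smul_lie, hD]
        rw [h1]
        have hy : ⁅Y, Z⁆ ∈ V (k + 1 + 2) := hYbr (k + 2) (by omega) Z hZ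
        exact sub_mem (Submodule.smul_mem _ _ (hVU k hZ))
          (Submodule.smul_mem _ _ (hVU (k + 1) hy))
      · have : V (k + 2) = ⊥ := hTD.eq_bot_of_notin (k + 2) (Or.inr (by omega))
        have hZ0 : Z = 0 := by simpa [this] using hZ
        simp [hZ0]
    · intro x y hx hy
      rw [lie_add]
      exact add_mem hx hy
  -- the key computation: (ad W)^m X = X + (element of U)
  have key : ∀ m : ℕ, ∃ u ∈ U, ((LieAlgebra.ad ℝ L W) ^ m) X = X + u := by
    intro m
    induction m with
    | zero => exact ⟨0, zero_mem U, by simp⟩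
    | succ n ih =>
      obtain ⟨u, hu, hn⟩ := ih
      have hDX : ⁅D, X⁆ = ((1 : ℕ) : ℝ) • X := hTD.grading 1 le_rfl h1s X hX
      have hbrX : ⁅W, X⁆ = X - α • ⁅Y, X⁆ := by
        rw [hW, sub_lie, smul_lie, hDX]; push_cast; rw [one_smul]
      refine ⟨-(α • ⁅Y, X⁆) + ⁅W, u⁆, add_mem (neg_mem (Submodule.smul_mem _ _
        (hVU 0 (hYbr 1 le_rfl X hX)))) (hadU u hu), ?_⟩
      rw [pow_succ', Module.End.mul_apply, hn, LieAlgebra.ad_apply, lie_add, hbrX]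
      abel
  -- U is disjoint from V 1
  have hdisj : Disjoint (V 1) U := by
    have h1 : Disjoint (V 1) (⨆ j, ⨆ _ : j ≠ 1, V j) := hTD.independent 1
    refine h1.mono_right (iSup_le fun k => ?_)
    exact le_iSup_of_le (k + 2) (le_iSup_of_le (by omega) le_rfl)
  have part1 : ∀ m : ℕ, ((LieAlgebra.ad ℝ L W) ^ m) X ≠ 0 := by
    intro m hm
    obtain ⟨u, hu, hn⟩ := key m
    rw [hn] at hm
    have hXU : X ∈ U := by
      have : X = -u := by linear_combination (norm := module) hm
      rw [this]; exact neg_mem hu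
    exact hX0 (Submodule.disjoint_def.mp hdisj X hX hXU)
  refine ⟨part1, ?_⟩
  rintro K hK ⟨hWK, hXK⟩
  set w : K := ⟨W, hWK⟩
  set x : K := ⟨X, hXK⟩
  haveI : LieModule.IsNilpotent K K := (LieModule.isNilpotent_iff (R := ℝ) (L := K) (M := K)).mpr hK
  obtain ⟨n, hn⟩ := LieModule.isNilpotent_toEnd_of_isNilpotent (R := ℝ) (L := K) (M := K) w
  have hcomm : ∀ m : ℕ, (((LieModule.toEnd ℝ K K w) ^ m) x : L)
      = ((LieAlgebra.ad ℝ L W) ^ m) X := by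
    intro m
    induction m with
    | zero => simp; rfl
    | succ k ih =>
      rw [pow_succ', pow_succ', Module.End.mul_apply, Module.End.mul_apply,
        LieModule.toEnd_apply_apply, LieAlgebra.ad_apply, ← ih]
      rfl
  apply part1 n
  rw [← hcomm n, hn]
  simp
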